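/- Let f be transported along the characteristic flow of ∂_t f + ξ·∇_x f + E(t,x)·∇_ξ f = 0 on 𝕋^d × ℝ^d with ‖E‖_{L^∞} ≤ F. Suppose a, b : 𝕋^d × ℝ^d → ℝ satisfy a ≤ f(0,·,·) ≤ b, |∇_{x,ξ} a|, |∇_{x,ξ} b| ≤ c/(1 + |ξ|^{d+2}), and set ρ_a(x) = ∫ a dξ ≥ m > 0, ρ_b(x) = ∫ b dξ ≤ M < ∞. Then there exists R = R(F, c, d) > 0 such that for all t ∈ [0, min(T,1)] and all x, ρ_a(x) − Rt ≤ ρ(t,x) ≤ ρ_b(x) + Rt, where ρ(t,x) = ∫ f(t,x,ξ) dξ. -/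

import Mathlib

open MeasureTheory Real RealInnerProductSpace

noncomputable section

/-- `ℤ^d`-periodicity of a function on `ℝ^d`, i.e. a function on the torus. -/
def ZPeriodic {d : ℕ} {α : Type*} (f : EuclideanSpace ℝ (Fin d) → α) : Prop :=
  ∀ (x : EuclideanSpace ℝ (Fin d)) (k : Fin d → ℤ), f (WithLp.toLp 2 (fun i => x i + (k i : ℝ))) = f x

set_option linter.unusedSectionVars false
set_option linter.unusedVariables false
set_option maxHeartbeats 1000000

section AuxAll
variable {E : Type*} [NormedAddCommGroup E] [InnerProductSpace ℝ E] [CompleteSpace E]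


variable {E : Type*} [NormedAddCommGroup E] [InnerProductSpace ℝ E] [CompleteSpace E]

lemma inner_gradient_eq_fderiv (h : E → ℝ) (x v : E) :
    ⟪gradient h x, v⟫ = fderiv ℝ h x v :=
  InnerProductSpace.toDual_symm_apply

lemma fderiv_slice1 {P : ℝ × E × E → ℝ} {s : ℝ} {y η : E}
    (hP : DifferentiableAt ℝ P (s, y, η)) :
    deriv (fun s' => P (s', y, η)) s = fderiv ℝ P (s, y, η) (1, 0, 0) := by
  have hc : HasDerivAt (fun s' : ℝ => ((s', y, η) : ℝ × E × E)) (1, 0, 0) s :=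
    (hasDerivAt_id s).prodMk ((hasDerivAt_const s y).prodMk (hasDerivAt_const s η))
  exact (hP.hasFDerivAt.comp_hasDerivAt s hc).deriv

lemma inner_gradient_slice2 {P : ℝ × E × E → ℝ} {s : ℝ} {y η : E}
    (hP : DifferentiableAt ℝ P (s, y, η)) (v : E) :
    ⟪gradient (fun y' => P (s, y', η)) y, v⟫ = fderiv ℝ P (s, y, η) (0, v, 0) := by
  rw [inner_gradient_eq_fderiv]
  have h2 : HasFDerivAt (fun y' : E => ((s, y', η) : ℝ × E × E))
      ((0 : E →L[ℝ] ℝ).prod ((ContinuousLinearMap.id ℝ E).prod (0 : E →L[ℝ] E))) y :=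
    (hasFDerivAt_const s y).prodMk ((hasFDerivAt_id y).prodMk (hasFDerivAt_const η y))
  rw [show (fun y' => P (s, y', η)) = (P ∘ fun y' => (s, y', η)) from rfl,
    (hP.hasFDerivAt.comp y h2).fderiv]
  simp

lemma inner_gradient_slice3 {P : ℝ × E × E → ℝ} {s : ℝ} {y η : E}
    (hP : DifferentiableAt ℝ P (s, y, η)) (v : E) :
    ⟪gradient (fun η' => P (s, y, η')) η, v⟫ = fderiv ℝ P (s, y, η) (0, 0, v) := by
  rw [inner_gradient_eq_fderiv]
  have h2 : HasFDerivAt (fun η' : E => ((s, y, η') : ℝ × E × E))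
      ((0 : E →L[ℝ] ℝ).prod ((0 : E →L[ℝ] E).prod (ContinuousLinearMap.id ℝ E))) η :=
    (hasFDerivAt_const s η).prodMk ((hasFDerivAt_const y η).prodMk (hasFDerivAt_id η))
  rw [show (fun η' => P (s, y, η')) = (P ∘ fun η' => (s, y, η')) from rfl,
    (hP.hasFDerivAt.comp η h2).fderiv]
  simp

lemma pde_fderiv (f : ℝ → E → E → ℝ) (Ef : ℝ → E → E)
    (hf : ContDiff ℝ 1 fun p : ℝ × E × E => f p.1 p.2.1 p.2.2)
    (hPDE : ∀ t x ξ, deriv (fun s => f s x ξ) t + ⟪ξ, gradient (fun y => f t y ξ) x⟫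
      + ⟪Ef t x, gradient (fun η => f t x η) ξ⟫ = 0) :
    ∀ s y η, fderiv ℝ (fun p : ℝ × E × E => f p.1 p.2.1 p.2.2) (s, y, η) (1, η, Ef s y) = 0 := by
  intro s y η
  set P : ℝ × E × E → ℝ := fun p => f p.1 p.2.1 p.2.2 with hPdef
  have hD : DifferentiableAt ℝ P (s, y, η) := (hf.differentiable one_ne_zero) _
  have h1 : deriv (fun s' => f s' y η) s = fderiv ℝ P (s, y, η) (1, 0, 0) :=
    fderiv_slice1 hD
  have h2 : ⟪η, gradient (fun y' => f s y' η) y⟫ = fderiv ℝ P (s, y, η) (0, η, 0) := by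
    rw [real_inner_comm]; exact inner_gradient_slice2 hD η
  have h3 : ⟪Ef s y, gradient (fun η' => f s y η') η⟫ = fderiv ℝ P (s, y, η) (0, 0, Ef s y) := by
    rw [real_inner_comm]; exact inner_gradient_slice3 hD (Ef s y)
  have := hPDE s y η
  rw [h1, h2, h3] at this
  have hsum : ((1 : ℝ), η, Ef s y) = ((1:ℝ), (0:E), (0:E)) + ((0:ℝ), η, (0:E)) + ((0:ℝ), (0:E), Ef s y) := by
    simp
  rw [hsum, map_add, map_add]
  linarith



lemma grad_decay_lip (c F : ℝ) (d' : ℕ) (hc : 0 ≤ c) (hF : 0 ≤ F)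
    (a : E → E → ℝ) (ha : ContDiff ℝ 1 fun q : E × E => a q.1 q.2)
    (hdecay : ∀ x ξ, Real.sqrt (‖gradient (fun y => a y ξ) x‖ ^ 2
      + ‖gradient (fun η => a x η) ξ‖ ^ 2) ≤ c / (1 + ‖ξ‖ ^ d'))
    (x ξ X Ξ : E) (hΞ : ‖Ξ - ξ‖ ≤ F) :
    |a X Ξ - a x ξ| ≤ 2 * c / (1 + (max 0 (‖ξ‖ - F)) ^ d') * max ‖X - x‖ ‖Ξ - ξ‖ := by
  set A : E × E → ℝ := fun q => a q.1 q.2 with hA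
  set m : ℝ := (max 0 (‖ξ‖ - F)) ^ d' with hm
  have hm0 : 0 ≤ m := by positivity
  have hB0 : 0 ≤ 2 * c / (1 + m) := by positivity
  -- bound on fderiv over the segment
  have hbound : ∀ z ∈ segment ℝ ((x, ξ) : E × E) (X, Ξ), ‖fderiv ℝ A z‖ ≤ 2 * c / (1 + m) := by
    rintro z hz
    obtain ⟨u, v, hu, hv, huv, rfl⟩ := hz
    set y := u • x + v • X with hy
    set η := u • ξ + v • Ξ with hη
    have hzz : (u • ((x, ξ) : E × E) + v • (X, Ξ)) = (y, η) := rfl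
    have hηξ : η - ξ = v • (Ξ - ξ) := by
      rw [hη, smul_sub]
      have : u = 1 - v := by linarith
      rw [this]; module
    have hηb : ‖η - ξ‖ ≤ F := by
      rw [hηξ, norm_smul, Real.norm_eq_abs, abs_of_nonneg hv]
      calc v * ‖Ξ - ξ‖ ≤ 1 * ‖Ξ - ξ‖ := by
            apply mul_le_mul_of_nonneg_right (by linarith) (norm_nonneg _)
        _ ≤ F := by rw [one_mul]; exact hΞ
    have hηlow : max 0 (‖ξ‖ - F) ≤ ‖η‖ := by
      apply max_le (norm_nonneg _)
      have := norm_sub_norm_le ξ η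
      rw [← norm_neg (ξ - η), neg_sub] at this
      linarith
    have hden : 1 + m ≤ 1 + ‖η‖ ^ d' := by
      have := pow_le_pow_left₀ (le_max_left 0 _) hηlow d'
      linarith
    have hcd : c / (1 + ‖η‖ ^ d') ≤ c / (1 + m) :=
      div_le_div_of_nonneg_left hc (by positivity) hden
    -- gradients of the slices
    have hD : DifferentiableAt ℝ A (y, η) := (ha.differentiable one_ne_zero) _
    have hdec := hdecay y η
    set g1 := gradient (fun y' => a y' η) y with hg1
    set g2 := gradient (fun η' => a y η') η with hg2
    have hg1n : ‖g1‖ ≤ c / (1 + m) := by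
      have h' : Real.sqrt (‖g1‖ ^ 2) ≤ Real.sqrt (‖g1‖ ^ 2 + ‖g2‖ ^ 2) :=
        Real.sqrt_le_sqrt (le_add_of_nonneg_right (by positivity))
      rw [Real.sqrt_sq (norm_nonneg _)] at h'
      exact le_trans (le_trans h' hdec) hcd
    have hg2n : ‖g2‖ ≤ c / (1 + m) := by
      have h' : Real.sqrt (‖g2‖ ^ 2) ≤ Real.sqrt (‖g1‖ ^ 2 + ‖g2‖ ^ 2) :=
        Real.sqrt_le_sqrt (le_add_of_nonneg_left (by positivity))
      rw [Real.sqrt_sq (norm_nonneg _)] at h'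
      exact le_trans (le_trans h' hdec) hcd
    -- partial-derivative decomposition
    have hslice1 : ∀ w : E, fderiv ℝ (fun y' => a y' η) y w = fderiv ℝ A (y, η) (w, 0) := by
      intro w
      have h2 : HasFDerivAt (fun y' : E => ((y', η) : E × E))
          (ContinuousLinearMap.inl ℝ E E) y := hasFDerivAt_prodMk_left y η
      rw [show (fun y' => a y' η) = (A ∘ fun y' => (y', η)) from rfl,
        (hD.hasFDerivAt.comp y h2).fderiv]
      simp
    have hslice2 : ∀ w : E, fderiv ℝ (fun η' => a y η') η w = fderiv ℝ A (y, η) (0, w) := by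
      intro w
      have h2 : HasFDerivAt (fun η' : E => ((y, η') : E × E))
          (ContinuousLinearMap.inr ℝ E E) η := hasFDerivAt_prodMk_right y η
      rw [show (fun η' => a y η') = (A ∘ fun η' => (y, η')) from rfl,
        (hD.hasFDerivAt.comp η h2).fderiv]
      simp
    rw [hzz]
    refine ContinuousLinearMap.opNorm_le_bound _ hB0 ?_
    intro w
    have hw : fderiv ℝ A (y, η) w = fderiv ℝ A (y, η) (w.1, 0) + fderiv ℝ A (y, η) (0, w.2) := by
      rw [← map_add]
      congr 1
      exact (Prod.ext (by simp) (by simp)).symm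
    have h1' : |fderiv ℝ A (y, η) (w.1, 0)| ≤ c / (1 + m) * ‖w‖ := by
      rw [← hslice1 w.1, ← inner_gradient_eq_fderiv, ← hg1]
      calc |⟪g1, w.1⟫| ≤ ‖g1‖ * ‖w.1‖ := abs_real_inner_le_norm _ _
        _ ≤ (c / (1 + m)) * ‖w‖ :=
            mul_le_mul hg1n (norm_fst_le w) (norm_nonneg _) (by positivity)
    have h2' : |fderiv ℝ A (y, η) (0, w.2)| ≤ c / (1 + m) * ‖w‖ := by
      rw [← hslice2 w.2, ← inner_gradient_eq_fderiv, ← hg2]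
      calc |⟪g2, w.2⟫| ≤ ‖g2‖ * ‖w.2‖ := abs_real_inner_le_norm _ _
        _ ≤ (c / (1 + m)) * ‖w‖ :=
            mul_le_mul hg2n (norm_snd_le w) (norm_nonneg _) (by positivity)
    rw [hw]
    calc ‖fderiv ℝ A (y, η) (w.1, 0) + fderiv ℝ A (y, η) (0, w.2)‖
        ≤ |fderiv ℝ A (y, η) (w.1, 0)| + |fderiv ℝ A (y, η) (0, w.2)| := norm_add_le _ _
      _ ≤ c / (1 + m) * ‖w‖ + c / (1 + m) * ‖w‖ := add_le_add h1' h2'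
      _ = 2 * c / (1 + m) * ‖w‖ := by ring
  have hmvt := Convex.norm_image_sub_le_of_norm_fderiv_le
    (fun z _ => (ha.differentiable one_ne_zero) z) hbound (convex_segment _ _)
    (left_mem_segment ℝ ((x, ξ) : E × E) (X, Ξ)) (right_mem_segment ℝ ((x, ξ) : E × E) (X, Ξ))
  have hnorm : ‖((X, Ξ) : E × E) - (x, ξ)‖ = max ‖X - x‖ ‖Ξ - ξ‖ := by
    rw [Prod.norm_def]; rfl
  rw [Real.norm_eq_abs] at hmvt
  calc |a X Ξ - a x ξ| = |A (X, Ξ) - A (x, ξ)| := rfl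
    _ ≤ 2 * c / (1 + m) * ‖((X, Ξ) : E × E) - (x, ξ)‖ := hmvt
    _ = 2 * c / (1 + m) * max ‖X - x‖ ‖Ξ - ξ‖ := by rw [hnorm]


variable [FiniteDimensional ℝ E]

lemma euler_approx (F : ℝ) (hF : 0 < F) (f : ℝ → E → E → ℝ) (Ef : ℝ → E → E)
    (hf : ContDiff ℝ 1 (fun p : ℝ × E × E => f p.1 p.2.1 p.2.2))
    (hEc : Continuous fun p : ℝ × E => Ef p.1 p.2)
    (hEb : ∀ t x, ‖Ef t x‖ ≤ F)
    (hPDE : ∀ s y η, fderiv ℝ (fun p : ℝ × E × E => f p.1 p.2.1 p.2.2) (s, y, η)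
      (1, η, Ef s y) = 0)
    {t : ℝ} (ht0 : 0 ≤ t) (ht1 : t ≤ 1) (x ξ : E) {ε : ℝ} (hε : 0 < ε) :
    ∃ X Ξ : E, ‖X - x‖ ≤ (‖ξ‖ + F) * t ∧ ‖Ξ - ξ‖ ≤ F * t ∧ |f t x ξ - f 0 X Ξ| ≤ ε := by
  rcases eq_or_lt_of_le ht0 with rfl | htpos
  · exact ⟨x, ξ, by simp [hε.le], by simp [hε.le], by simp [hε.le]⟩
  set P : ℝ × E × E → ℝ := fun p => f p.1 p.2.1 p.2.2 with hPdef
  set V : ℝ × E × E → E × E := fun q => (q.2.2, Ef q.1 q.2.1) with hVdef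
  set Kc : Set (ℝ × E × E) :=
    Set.Icc 0 1 ×ˢ (Metric.closedBall x (‖ξ‖ + F + 1) ×ˢ Metric.closedBall ξ (F + 1)) with hKdef
  have hKc : IsCompact Kc :=
    isCompact_Icc.prod ((isCompact_closedBall _ _).prod (isCompact_closedBall _ _))
  have hVc : Continuous V :=
    (continuous_snd.snd).prodMk (hEc.comp (continuous_fst.prodMk continuous_snd.fst))
  have hPdiff : Differentiable ℝ P := hf.differentiable one_ne_zero
  have hq0K : ((0 : ℝ), x, ξ) ∈ Kc :=
    ⟨⟨le_rfl, zero_le_one⟩, Metric.mem_closedBall_self (by positivity),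
      Metric.mem_closedBall_self (by positivity)⟩
  obtain ⟨L, hL, hLb⟩ : ∃ L : ℝ, 0 < L ∧ ∀ q ∈ Kc, ‖fderiv ℝ P q‖ ≤ L := by
    have hPfc : Continuous fun q => ‖fderiv ℝ P q‖ := (hf.continuous_fderiv one_ne_zero).norm
    obtain ⟨C, hC⟩ := hKc.exists_bound_of_continuousOn hPfc.continuousOn
    have hC0 : 0 ≤ C := le_trans (norm_nonneg _) (hC _ hq0K)
    refine ⟨C + 1, by positivity, fun q hq => ?_⟩
    have := hC q hq
    rw [Real.norm_eq_abs] at this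
    exact le_trans (le_trans (le_abs_self _) this) (by linarith)
  have hUC := hKc.uniformContinuousOn_of_continuous hVc.continuousOn
  rw [Metric.uniformContinuousOn_iff] at hUC
  obtain ⟨δ, hδ, hUC⟩ := hUC (ε / L) (by positivity)
  obtain ⟨S, hS1, hSF⟩ : ∃ S : ℝ, 1 ≤ S ∧ ‖ξ‖ + F ≤ S :=
    ⟨1 + ‖ξ‖ + F, by nlinarith [norm_nonneg ξ], by linarith⟩
  have hS : 0 < S := lt_of_lt_of_le one_pos hS1
  obtain ⟨n, hn⟩ := exists_nat_gt (t * S / δ)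
  have hnpos : 0 < (n : ℝ) := lt_of_le_of_lt (by positivity) hn
  have hn0 : (n : ℝ) ≠ 0 := ne_of_gt hnpos
  obtain ⟨h, hh0, hnh, hmesh⟩ : ∃ h : ℝ, 0 < h ∧ (n : ℝ) * h = t ∧ h * S < δ := by
    refine ⟨t / n, div_pos htpos hnpos, by field_simp, ?_⟩
    rw [div_mul_eq_mul_div, div_lt_iff₀ hnpos, mul_comm δ]
    calc t * S = (t * S / δ) * δ := by field_simp
      _ < n * δ := mul_lt_mul_of_pos_right hn hδ
  obtain ⟨Q, hQ0, hQs⟩ : ∃ Q : ℕ → E × E, Q 0 = (x, ξ) ∧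
      ∀ k : ℕ, Q (k + 1) = Q k - h • V (t - k * h, Q k) :=
    ⟨fun k => Nat.rec ((x, ξ) : E × E) (fun k p => p - h • V (t - k * h, p)) k, rfl,
      fun k => rfl⟩
  have key : ∀ k : ℕ, k ≤ n →
      ‖(Q k).1 - x‖ ≤ (‖ξ‖ + F) * (k * h) ∧ ‖(Q k).2 - ξ‖ ≤ F * (k * h) ∧
      |f (t - k * h) (Q k).1 (Q k).2 - f t x ξ| ≤ L * (ε / L) * (k * h) := by
    intro k
    induction k with
    | zero => intro _; rw [hQ0]; refine ⟨by simp, by simp, by simp⟩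
    | succ k ih =>
      intro hk
      obtain ⟨ih1, ih2, ih3⟩ := ih (Nat.le_of_succ_le hk)
      set p : E × E := Q k with hpdef
      set τ : ℝ := t - k * h with hτdef
      have hτ'cast : t - ((k + 1 : ℕ) : ℝ) * h = τ - h := by push_cast; rw [hτdef]; ring
      set τ' : ℝ := τ - h with hτ'def
      have hkh0 : 0 ≤ (k : ℝ) * h := by positivity
      have hkh : (k : ℝ) * h ≤ t := by
        calc (k : ℝ) * h ≤ (n : ℝ) * h :=
              mul_le_mul_of_nonneg_right (by exact_mod_cast Nat.le_of_succ_le hk) hh0.le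
          _ = t := hnh
      have hk1h : ((k : ℝ) + 1) * h ≤ t := by
        calc ((k : ℝ) + 1) * h ≤ (n : ℝ) * h := by
              apply mul_le_mul_of_nonneg_right _ hh0.le
              exact_mod_cast hk
          _ = t := hnh
      have hτ'0 : 0 ≤ τ' := by rw [hτ'def, hτdef]; linarith
      have hτt : τ ≤ t := by rw [hτdef]; linarith
      set v : E × E := V (τ, p) with hvdef
      have hp2 : ‖p.2‖ ≤ ‖ξ‖ + F := by
        have h1 := norm_add_le (p.2 - ξ) ξ
        rw [sub_add_cancel] at h1
        have h2 : F * ((k : ℝ) * h) ≤ F * 1 :=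
          mul_le_mul_of_nonneg_left (le_trans hkh ht1) hF.le
        linarith
      have hv1 : ‖v.1‖ ≤ ‖ξ‖ + F := hp2
      have hv2 : ‖v.2‖ ≤ F := hEb τ p.1
      have hvn : ‖v‖ ≤ ‖ξ‖ + F := by
        rw [Prod.norm_def]
        exact max_le hv1 (le_trans hv2 (by linarith [norm_nonneg ξ]))
      set γ : ℝ → ℝ × E × E := fun u => (u, p + (u - τ) • v) with hγdef
      have hmem : ∀ u ∈ Set.Icc τ' τ, γ u ∈ Kc ∧ ((τ, p) : ℝ × E × E) ∈ Kc ∧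
          dist ((τ, p) : ℝ × E × E) (γ u) < δ := by
        intro u hu
        have hut : |u - τ| ≤ h := by
          rw [abs_le]; exact ⟨by linarith [hu.1], by linarith [hu.2]⟩
        have hu01 : u ∈ Set.Icc (0 : ℝ) 1 := ⟨le_trans hτ'0 hu.1, le_trans hu.2 (le_trans hτt ht1)⟩
        have hx1 : ‖p.1 + (u - τ) • v.1 - x‖ ≤ ‖ξ‖ + F + 1 := by
          calc ‖p.1 + (u - τ) • v.1 - x‖ = ‖(p.1 - x) + (u - τ) • v.1‖ := by
                rw [add_sub_right_comm]
            _ ≤ ‖p.1 - x‖ + ‖(u - τ) • v.1‖ := norm_add_le _ _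
            _ ≤ (‖ξ‖ + F) * (k * h) + |u - τ| * ‖v.1‖ := by
                rw [norm_smul, Real.norm_eq_abs]; exact add_le_add ih1 le_rfl
            _ ≤ (‖ξ‖ + F) * (k * h) + h * (‖ξ‖ + F) :=
                add_le_add_right (mul_le_mul hut hv1 (norm_nonneg _) hh0.le) _
            _ = (‖ξ‖ + F) * ((k + 1) * h) := by ring
            _ ≤ (‖ξ‖ + F) * t := mul_le_mul_of_nonneg_left hk1h (by positivity)
            _ ≤ ‖ξ‖ + F + 1 := by nlinarith [norm_nonneg ξ, hF.le]
        have hx2 : ‖p.2 + (u - τ) • v.2 - ξ‖ ≤ F + 1 := by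
          calc ‖p.2 + (u - τ) • v.2 - ξ‖ = ‖(p.2 - ξ) + (u - τ) • v.2‖ := by
                rw [add_sub_right_comm]
            _ ≤ ‖p.2 - ξ‖ + ‖(u - τ) • v.2‖ := norm_add_le _ _
            _ ≤ F * (k * h) + |u - τ| * ‖v.2‖ := by
                rw [norm_smul, Real.norm_eq_abs]; exact add_le_add ih2 le_rfl
            _ ≤ F * (k * h) + h * F :=
                add_le_add_right (mul_le_mul hut hv2 (norm_nonneg _) hh0.le) _
            _ = F * ((k + 1) * h) := by ring
            _ ≤ F * t := mul_le_mul_of_nonneg_left hk1h hF.le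
            _ ≤ F + 1 := by nlinarith [hF.le]
        have hγK : γ u ∈ Kc := by
          refine ⟨hu01, ?_, ?_⟩
          · rw [Metric.mem_closedBall, dist_eq_norm]; exact hx1
          · rw [Metric.mem_closedBall, dist_eq_norm]; exact hx2
        have hτpK : ((τ, p) : ℝ × E × E) ∈ Kc := by
          refine ⟨⟨by linarith, le_trans hτt ht1⟩, ?_, ?_⟩
          · rw [Metric.mem_closedBall, dist_eq_norm]
            calc ‖p.1 - x‖ ≤ (‖ξ‖ + F) * (k * h) := ih1
              _ ≤ (‖ξ‖ + F) * t := mul_le_mul_of_nonneg_left hkh (by positivity)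
              _ ≤ ‖ξ‖ + F + 1 := by nlinarith [norm_nonneg ξ, hF.le]
          · rw [Metric.mem_closedBall, dist_eq_norm]
            calc ‖p.2 - ξ‖ ≤ F * (k * h) := ih2
              _ ≤ F * t := mul_le_mul_of_nonneg_left hkh hF.le
              _ ≤ F + 1 := by nlinarith [hF.le]
        have hdist : dist ((τ, p) : ℝ × E × E) (γ u) < δ := by
          rw [Prod.dist_eq]
          have hd1 : dist τ u ≤ h := by rw [Real.dist_eq, abs_sub_comm]; exact hut
          have hd2 : dist p (p + (u - τ) • v) ≤ h * (‖ξ‖ + F) := by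
            rw [dist_eq_norm, show p - (p + (u - τ) • v) = -((u - τ) • v) by abel, norm_neg,
              norm_smul, Real.norm_eq_abs]
            exact mul_le_mul hut hvn (norm_nonneg _) hh0.le
          calc max (dist τ u) (dist p (p + (u - τ) • v)) ≤ h * S := by
                apply max_le
                · calc dist τ u ≤ h := hd1
                    _ = h * 1 := (mul_one h).symm
                    _ ≤ h * S := mul_le_mul_of_nonneg_left hS1 hh0.le
                · calc dist p (p + (u - τ) • v) ≤ h * (‖ξ‖ + F) := hd2
                    _ ≤ h * S := mul_le_mul_of_nonneg_left hSF hh0.le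
            _ < δ := hmesh
        exact ⟨hγK, hτpK, hdist⟩
      have hφd : ∀ u ∈ Set.Icc τ' τ,
          HasDerivAt (fun u' => P (γ u')) (fderiv ℝ P (γ u) ((1 : ℝ), v)) u := by
        intro u _
        have hγd : HasDerivAt γ ((1 : ℝ), v) u := by
          have h2 : HasDerivAt (fun u' : ℝ => p + (u' - τ) • v) v u := by
            have h3 : HasDerivAt (fun u' : ℝ => (u' - τ) • v) ((1 : ℝ) • v) u :=
              ((hasDerivAt_id u).sub_const τ).smul_const v
            rw [one_smul] at h3
            exact h3.const_add p
          exact (hasDerivAt_id u).prodMk h2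
        exact (hPdiff (γ u)).hasFDerivAt.comp_hasDerivAt u hγd
      have hφb : ∀ u ∈ Set.Icc τ' τ, ‖fderiv ℝ P (γ u) ((1 : ℝ), v)‖ ≤ L * (ε / L) := by
        intro u hu
        obtain ⟨hγK, hτpK, hdist⟩ := hmem u hu
        have hzero : fderiv ℝ P (γ u) ((1 : ℝ), V (γ u)) = 0 :=
          hPDE (γ u).1 (γ u).2.1 (γ u).2.2
        have hsplit : ((1 : ℝ), v) = ((1 : ℝ), V (γ u)) + ((0 : ℝ), v - V (γ u)) := by
          rw [Prod.mk_add_mk, add_zero, add_sub_cancel]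
        rw [hsplit, map_add, hzero, zero_add]
        calc ‖fderiv ℝ P (γ u) ((0 : ℝ), v - V (γ u))‖
            ≤ ‖fderiv ℝ P (γ u)‖ * ‖((0 : ℝ), v - V (γ u))‖ :=
              ContinuousLinearMap.le_opNorm _ _
          _ ≤ L * (ε / L) := by
              apply mul_le_mul (hLb _ hγK) _ (norm_nonneg _) hL.le
              rw [Prod.norm_def]
              have hre : ‖v - V (γ u)‖ = dist (V ((τ, p) : ℝ × E × E)) (V (γ u)) := by
                rw [dist_eq_norm]
              rw [hre]
              have hlt := hUC _ hτpK _ hγK hdist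
              simp only [norm_zero]
              rw [max_eq_right dist_nonneg]
              exact hlt.le
      have hττ' : τ' ≤ τ := by rw [hτ'def]; linarith
      have hmvt := Convex.norm_image_sub_le_of_norm_hasDerivWithin_le
        (f := fun u' => P (γ u')) (f' := fun u => fderiv ℝ P (γ u) ((1 : ℝ), v))
        (fun u hu => (hφd u hu).hasDerivWithinAt) hφb (convex_Icc τ' τ)
        ⟨hττ', le_rfl⟩ ⟨le_rfl, hττ'⟩
      have hγτ : γ τ = (τ, p) := by
        rw [hγdef]; simp
      have hγτ' : γ τ' = (τ', Q (k + 1)) := by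
        rw [hγdef]
        simp only [Prod.mk.injEq, true_and]
        rw [hQs k, ← hpdef, ← hτdef, ← hvdef, hτ'def,
          show (τ - h - τ) = -h by ring, neg_smul, ← sub_eq_add_neg]
      beta_reduce at hmvt
      rw [hγτ, hγτ'] at hmvt
      have hmvt' : |P (τ', Q (k + 1)) - P (τ, p)| ≤ L * (ε / L) * h := by
        rw [← Real.norm_eq_abs]
        calc ‖P (τ', Q (k + 1)) - P (τ, p)‖ ≤ L * (ε / L) * ‖τ' - τ‖ := hmvt
          _ = L * (ε / L) * h := by
              rw [hτ'def, show τ - h - τ = -h by ring, norm_neg, Real.norm_eq_abs,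
                abs_of_pos hh0]
      have hQk1 : Q (k + 1) = p - h • v := by rw [hQs k, ← hpdef, ← hτdef, ← hvdef]
      refine ⟨?_, ?_, ?_⟩
      · rw [hQk1]
        have h1 : (p - h • v).1 = p.1 - h • v.1 := rfl
        rw [h1]
        calc ‖p.1 - h • v.1 - x‖ = ‖(p.1 - x) - h • v.1‖ := by rw [sub_right_comm]
          _ ≤ ‖p.1 - x‖ + ‖h • v.1‖ := norm_sub_le _ _
          _ ≤ (‖ξ‖ + F) * (k * h) + h * (‖ξ‖ + F) := by
              rw [norm_smul, Real.norm_eq_abs, abs_of_pos hh0]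
              exact add_le_add ih1 (mul_le_mul_of_nonneg_left hv1 hh0.le)
          _ = (‖ξ‖ + F) * ((k + 1 : ℕ) * h) := by push_cast; ring
      · rw [hQk1]
        have h1 : (p - h • v).2 = p.2 - h • v.2 := rfl
        rw [h1]
        calc ‖p.2 - h • v.2 - ξ‖ = ‖(p.2 - ξ) - h • v.2‖ := by rw [sub_right_comm]
          _ ≤ ‖p.2 - ξ‖ + ‖h • v.2‖ := norm_sub_le _ _
          _ ≤ F * (k * h) + h * F := by
              rw [norm_smul, Real.norm_eq_abs, abs_of_pos hh0]
              exact add_le_add ih2 (mul_le_mul_of_nonneg_left hv2 hh0.le)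
          _ = F * ((k + 1 : ℕ) * h) := by push_cast; ring
      · have hfτ' : f (t - ((k + 1 : ℕ) : ℝ) * h) (Q (k + 1)).1 (Q (k + 1)).2
            = P (τ', Q (k + 1)) := by rw [hτ'cast]
        have hfτ : f (t - (k : ℕ) * h) p.1 p.2 = P (τ, p) := rfl
        rw [hfτ']
        calc |P (τ', Q (k + 1)) - f t x ξ|
            ≤ |P (τ', Q (k + 1)) - P (τ, p)| + |P (τ, p) - f t x ξ| := abs_sub_le _ _ _
          _ ≤ L * (ε / L) * h + L * (ε / L) * (k * h) := by
              refine add_le_add hmvt' ?_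
              rw [← hfτ]; exact ih3
          _ = L * (ε / L) * ((k + 1 : ℕ) * h) := by push_cast; ring
  obtain ⟨h1, h2, h3⟩ := key n le_rfl
  refine ⟨(Q n).1, (Q n).2, ?_, ?_, ?_⟩
  · rw [← hnh]; exact h1
  · rw [← hnh]; exact h2
  · have hzero : t - (n : ℝ) * h = 0 := by rw [hnh]; ring
    rw [hzero] at h3
    rw [abs_sub_comm] at h3
    calc |f t x ξ - f 0 (Q n).1 (Q n).2| ≤ L * (ε / L) * ((n : ℝ) * h) := h3
      _ = ε * t := by rw [hnh]; field_simp
      _ ≤ ε := by nlinarith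


end AuxAll

/-- control of the macroscopic density: if `f` is transported by
`∂_t f + ξ·∇_x f + E·∇_ξ f = 0` with `‖E‖_∞ ≤ F`, `a ≤ f(0) ≤ b` with
`|∇_{x,ξ}a|,|∇_{x,ξ}b| ≤ c/(1+|ξ|^{d+2})`, `ρ_a ≥ m > 0`, `ρ_b ≤ M`, then there is
`R = R(F,c,d) > 0` with `ρ_a(x) − Rt ≤ ρ(t,x) ≤ ρ_b(x) + Rt` for `t ∈ [0, min(T,1)]`. -/
theorem density_control (d : ℕ) (F c : ℝ) (hF : 0 < F) (hc : 0 < c) :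
    ∃ R : ℝ, 0 < R ∧
      ∀ (T m M : ℝ)
        (f : ℝ → EuclideanSpace ℝ (Fin d) → EuclideanSpace ℝ (Fin d) → ℝ)
        (Efield : ℝ → EuclideanSpace ℝ (Fin d) → EuclideanSpace ℝ (Fin d))
        (a b : EuclideanSpace ℝ (Fin d) → EuclideanSpace ℝ (Fin d) → ℝ),
        0 < T → 0 < m →
        ContDiff ℝ 1 (fun p : ℝ × EuclideanSpace ℝ (Fin d) × EuclideanSpace ℝ (Fin d) =>
          f p.1 p.2.1 p.2.2) →
        (∀ t ξ, ZPeriodic (fun x => f t x ξ)) →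
        Continuous (fun p : ℝ × EuclideanSpace ℝ (Fin d) => Efield p.1 p.2) →
        (∀ t x, ‖Efield t x‖ ≤ F) →
        (∀ t x ξ,
          deriv (fun s => f s x ξ) t + ⟪ξ, gradient (fun y => f t y ξ) x⟫
            + ⟪Efield t x, gradient (fun η => f t x η) ξ⟫ = 0) →
        ContDiff ℝ 1 (fun q : EuclideanSpace ℝ (Fin d) × EuclideanSpace ℝ (Fin d) =>
          a q.1 q.2) →
        ContDiff ℝ 1 (fun q : EuclideanSpace ℝ (Fin d) × EuclideanSpace ℝ (Fin d) =>
          b q.1 q.2) →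
        (∀ x ξ, a x ξ ≤ f 0 x ξ ∧ f 0 x ξ ≤ b x ξ) →
        (∀ x ξ, Real.sqrt (‖gradient (fun y => a y ξ) x‖ ^ 2
            + ‖gradient (fun η => a x η) ξ‖ ^ 2) ≤ c / (1 + ‖ξ‖ ^ (d + 2))) →
        (∀ x ξ, Real.sqrt (‖gradient (fun y => b y ξ) x‖ ^ 2
            + ‖gradient (fun η => b x η) ξ‖ ^ 2) ≤ c / (1 + ‖ξ‖ ^ (d + 2))) →
        (∀ x, Integrable (a x)) → (∀ x, Integrable (b x)) →
        (∀ t x, Integrable (f t x)) →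
        (∀ x, m ≤ ∫ ξ, a x ξ) → (∀ x, (∫ ξ, b x ξ) ≤ M) →
        ∀ t ∈ Set.Icc (0:ℝ) (min T 1), ∀ x,
          (∫ ξ, a x ξ) - R * t ≤ (∫ ξ, f t x ξ)
          ∧ (∫ ξ, f t x ξ) ≤ (∫ ξ, b x ξ) + R * t := by
  classical
  set g : EuclideanSpace ℝ (Fin d) → ℝ :=
    fun ξ => 2 * c / (1 + (max 0 (‖ξ‖ - F)) ^ (d + 2)) * (‖ξ‖ + F) with hgdef
  have hg0 : ∀ ξ, 0 ≤ g ξ := fun ξ =>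
    mul_nonneg (div_nonneg (by linarith) (by positivity))
      (add_nonneg (norm_nonneg _) hF.le)
  have hgcont : Continuous g := by
    apply Continuous.mul
    · apply Continuous.div continuous_const
      · exact continuous_const.add
          ((continuous_const.max (continuous_norm.sub continuous_const)).pow _)
      · intro ξ; positivity
    · exact continuous_norm.add continuous_const
  set C₀ : ℝ := 2 * c * (1 + F) * (2 + 2 * F) ^ (d + 2) with hC₀def
  have hgle : ∀ ξ : EuclideanSpace ℝ (Fin d), g ξ ≤ C₀ * (1 + ‖ξ‖) ^ (-(d + 1 : ℝ)) := by
    intro ξ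
    set u : ℝ := ‖ξ‖ with hudef
    have hu : 0 ≤ u := norm_nonneg _
    set m : ℝ := (max 0 (u - F)) ^ (d + 2) with hmdef
    have hm0 : 0 ≤ m := by positivity
    have hden : (1 + u) ^ (d + 2) ≤ (2 + 2 * F) ^ (d + 2) * (1 + m) := by
      rcases le_or_gt u (1 + 2 * F) with hcase | hcase
      · calc (1 + u) ^ (d + 2) ≤ (2 + 2 * F) ^ (d + 2) :=
            pow_le_pow_left₀ (by linarith) (by linarith) _
          _ ≤ (2 + 2 * F) ^ (d + 2) * (1 + m) :=
            le_mul_of_one_le_right (pow_nonneg (by linarith) _) (by linarith)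
      · have hmax : max 0 (u - F) = u - F := max_eq_right (by linarith)
        have h1 : 1 + u ≤ 2 * (u - F) := by linarith
        calc (1 + u) ^ (d + 2) ≤ (2 * (u - F)) ^ (d + 2) :=
            pow_le_pow_left₀ (by linarith) h1 _
          _ = 2 ^ (d + 2) * (u - F) ^ (d + 2) := mul_pow _ _ _
          _ ≤ (2 + 2 * F) ^ (d + 2) * (u - F) ^ (d + 2) :=
            mul_le_mul_of_nonneg_right (pow_le_pow_left₀ (by norm_num) (by linarith) _)
              (pow_nonneg (by linarith) _)
          _ = (2 + 2 * F) ^ (d + 2) * m := by rw [hmdef, hmax]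
          _ ≤ (2 + 2 * F) ^ (d + 2) * (1 + m) :=
            mul_le_mul_of_nonneg_left (by linarith) (pow_nonneg (by linarith) _)
    have hrpow : (1 + u) ^ (-(d + 1 : ℝ)) = ((1 + u) ^ (d + 1 : ℕ))⁻¹ := by
      rw [show (-(d + 1 : ℝ)) = -((d + 1 : ℕ) : ℝ) by push_cast; ring,
        Real.rpow_neg (by linarith), Real.rpow_natCast]
    rw [hrpow, ← div_eq_mul_inv]
    have hgval : g ξ = 2 * c / (1 + m) * (u + F) := rfl
    rw [hgval, div_mul_eq_mul_div, div_le_div_iff₀ (by linarith) (pow_pos (by linarith) _)]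
    calc 2 * c * (u + F) * (1 + u) ^ (d + 1)
        ≤ 2 * c * ((1 + F) * (1 + u)) * (1 + u) ^ (d + 1) := by
          apply mul_le_mul_of_nonneg_right _ (pow_nonneg (by linarith) _)
          apply mul_le_mul_of_nonneg_left _ (by linarith)
          nlinarith
      _ = 2 * c * (1 + F) * (1 + u) ^ (d + 2) := by ring
      _ ≤ 2 * c * (1 + F) * ((2 + 2 * F) ^ (d + 2) * (1 + m)) := by
          apply mul_le_mul_of_nonneg_left hden
          nlinarith
      _ = C₀ * (1 + m) := by rw [hC₀def]; ring
  have hint1 : Integrable (fun ξ : EuclideanSpace ℝ (Fin d) => (1 + ‖ξ‖) ^ (-(d + 1 : ℝ))) := by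
    apply integrable_one_add_norm
    rw [finrank_euclideanSpace_fin]
    exact_mod_cast lt_add_one d
  have hgint : Integrable g := by
    apply (hint1.const_mul C₀).mono' hgcont.aestronglyMeasurable
    filter_upwards with ξ
    rw [Real.norm_eq_abs, abs_of_nonneg (hg0 ξ)]
    exact hgle ξ
  have hgI : 0 ≤ ∫ ξ, g ξ := integral_nonneg hg0
  refine ⟨(∫ ξ, g ξ) + 1, by linarith, ?_⟩
  intro T m M f Efield a b hT hm hf hper hEc hEb hPDE ha hb hab ha' hb' haint hbint hfint
    hρa hρb t ht x
  have hPDE' := pde_fderiv f Efield hf hPDE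
  have ht0 : 0 ≤ t := ht.1
  have ht1 : t ≤ 1 := le_trans ht.2 (min_le_right _ _)
  have hpt : ∀ ξ, a x ξ - t * g ξ ≤ f t x ξ ∧ f t x ξ ≤ b x ξ + t * g ξ := by
    intro ξ
    have hB0 : 0 ≤ 2 * c / (1 + (max 0 (‖ξ‖ - F)) ^ (d + 2)) :=
      div_nonneg (by linarith) (by positivity)
    have hgt : 2 * c / (1 + (max 0 (‖ξ‖ - F)) ^ (d + 2)) * ((‖ξ‖ + F) * t) = t * g ξ := by
      rw [hgdef]; ring
    constructor
    · refine le_of_forall_pos_le_add ?_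
      intro ε hε
      obtain ⟨X, Ξ, hX, hΞ, hfc⟩ := euler_approx F hF f Efield hf hEc hEb hPDE' ht0 ht1 x ξ hε
      have hΞF : ‖Ξ - ξ‖ ≤ F := le_trans hΞ (by nlinarith)
      have hlip := grad_decay_lip c F (d + 2) hc.le hF.le a ha ha' x ξ X Ξ hΞF
      have hmax' : max ‖X - x‖ ‖Ξ - ξ‖ ≤ (‖ξ‖ + F) * t :=
        max_le hX (le_trans hΞ (by nlinarith [norm_nonneg ξ]))
      have h1 : a X Ξ ≤ f 0 X Ξ := (hab X Ξ).1
      have h2 : f 0 X Ξ - f t x ξ ≤ ε := by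
        have := abs_sub_le_iff.mp hfc
        linarith [this.2]
      have h3 : a x ξ - a X Ξ ≤ t * g ξ := by
        calc a x ξ - a X Ξ ≤ |a X Ξ - a x ξ| := by
              rw [abs_sub_comm]; exact le_abs_self _
          _ ≤ 2 * c / (1 + (max 0 (‖ξ‖ - F)) ^ (d + 2)) * max ‖X - x‖ ‖Ξ - ξ‖ := hlip
          _ ≤ 2 * c / (1 + (max 0 (‖ξ‖ - F)) ^ (d + 2)) * ((‖ξ‖ + F) * t) :=
              mul_le_mul_of_nonneg_left hmax' hB0
          _ = t * g ξ := hgt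
      linarith
    · refine le_of_forall_pos_le_add ?_
      intro ε hε
      obtain ⟨X, Ξ, hX, hΞ, hfc⟩ := euler_approx F hF f Efield hf hEc hEb hPDE' ht0 ht1 x ξ hε
      have hΞF : ‖Ξ - ξ‖ ≤ F := le_trans hΞ (by nlinarith)
      have hlip := grad_decay_lip c F (d + 2) hc.le hF.le b hb hb' x ξ X Ξ hΞF
      have hmax' : max ‖X - x‖ ‖Ξ - ξ‖ ≤ (‖ξ‖ + F) * t :=
        max_le hX (le_trans hΞ (by nlinarith [norm_nonneg ξ]))
      have h1 : f 0 X Ξ ≤ b X Ξ := (hab X Ξ).2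
      have h2 : f t x ξ - f 0 X Ξ ≤ ε := by
        have := abs_sub_le_iff.mp hfc
        linarith [this.1]
      have h3 : b X Ξ - b x ξ ≤ t * g ξ := by
        calc b X Ξ - b x ξ ≤ |b X Ξ - b x ξ| := le_abs_self _
          _ ≤ 2 * c / (1 + (max 0 (‖ξ‖ - F)) ^ (d + 2)) * max ‖X - x‖ ‖Ξ - ξ‖ := hlip
          _ ≤ 2 * c / (1 + (max 0 (‖ξ‖ - F)) ^ (d + 2)) * ((‖ξ‖ + F) * t) :=
              mul_le_mul_of_nonneg_left hmax' hB0
          _ = t * g ξ := hgt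
      linarith
  have hIa : Integrable (fun ξ => a x ξ - t * g ξ) := (haint x).sub (hgint.const_mul t)
  have hIb : Integrable (fun ξ => b x ξ + t * g ξ) := (hbint x).add (hgint.const_mul t)
  have hlow := integral_mono hIa (hfint t x) (fun ξ => (hpt ξ).1)
  have hup := integral_mono (hfint t x) hIb (fun ξ => (hpt ξ).2)
  rw [integral_sub (haint x) (hgint.const_mul t), integral_const_mul t fun ξ => g ξ] at hlow
  rw [integral_add (hbint x) (hgint.const_mul t), integral_const_mul t fun ξ => g ξ] at hup
  have htg : t * (∫ ξ, g ξ) ≤ ((∫ ξ, g ξ) + 1) * t := by nlinarith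
  constructor
  · linarith
  · linarith
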